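/- arXiv:2412.03134 — 5 statements merged into one kernel-verified Lean document; each statement's English description precedes it below -/
import Mathlib

section
/- (Lemma 1 of the paper.) Fix t with 2 ≤ t ≤ T and vectors x_0, ε_0, ξ ∈ ℝ^n and a scalar σ_0 ∈ ℝ, and set x_t = √ᾱ_t · x_0 + √(1−ᾱ_t) · (σ_0 ε_0 + ψ_t ξ). Define μ̃_t(x_t, x_0, ξ) = (√α_t (1−ᾱ_{t−1})/(1−ᾱ_t)) x_t + ((1−α_t)√ᾱ_{t−1}/(1−ᾱ_t)) x_0 + ν_t ξ. Then μ̃_t(x_t, x_0, ξ) = (1/√α_t) x_t − ((1−α_t)/(√(1−ᾱ_t) √α_t)) (σ_0 ε_0 + φ_t ξ). -/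
open Finset

/-- Lemma 1 of the paper: the posterior mean μ̃_t(x_t, x_0, ξ) can be rewritten as
(1/√α_t) x_t − ((1−α_t)/(√(1−ᾱ_t)√α_t)) (σ_0 ε_0 + φ_t ξ). -/
theorem tilde_mu_denoising_form
    (T n : ℕ) (β α αbar γ φ ψ ν : ℕ → ℝ)
    (hβ : ∀ t, 1 ≤ t → t ≤ T → 0 < β t ∧ β t < 1)
    (hα0 : α 0 = 1)
    (hα : ∀ t, 1 ≤ t → α t = 1 - β t)
    (hαbar : ∀ t, αbar t = ∏ i ∈ Finset.range (t + 1), α i)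
    (hφ : ∀ t, 1 ≤ t →
      φ t = Real.sqrt (α t) * Real.sqrt (1 - αbar t) / (1 - α t) * γ t)
    (hψ : ∀ t, 1 ≤ t → ψ t = (1 / Real.sqrt (1 - αbar t)) *
      ∑ i ∈ Finset.Icc 1 t, Real.sqrt (αbar t / αbar (i - 1)) * γ i)
    (hν : ∀ t, 2 ≤ t → ν t =
      ((1 - α t) * Real.sqrt (1 - αbar (t - 1)) * ψ (t - 1)
        - α t * (1 - αbar (t - 1)) * γ t) / (1 - αbar t))
    (t : ℕ) (ht2 : 2 ≤ t) (htT : t ≤ T)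
    (x₀ ε₀ ξ : EuclideanSpace ℝ (Fin n)) (σ₀ : ℝ)
    (xt : EuclideanSpace ℝ (Fin n))
    (hxt : xt = Real.sqrt (αbar t) • x₀
      + Real.sqrt (1 - αbar t) • (σ₀ • ε₀ + ψ t • ξ))
    (μt : EuclideanSpace ℝ (Fin n))
    (hμt : μt = (Real.sqrt (α t) * (1 - αbar (t - 1)) / (1 - αbar t)) • xt
      + ((1 - α t) * Real.sqrt (αbar (t - 1)) / (1 - αbar t)) • x₀
      + ν t • ξ) :
    μt = (1 / Real.sqrt (α t)) • xt
      - ((1 - α t) / (Real.sqrt (1 - αbar t) * Real.sqrt (α t))) •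
        (σ₀ • ε₀ + φ t • ξ) := by
  -- basic positivity
  have hαpos : ∀ u, 1 ≤ u → u ≤ T → 0 < α u ∧ α u < 1 := by
    intro u h1 h2
    have h := hβ u h1 h2
    rw [hα u h1]
    constructor <;> linarith [h.1, h.2]
  have hαbar_pos : ∀ u, u ≤ T → 0 < αbar u := by
    intro u hu
    rw [hαbar]
    apply Finset.prod_pos
    intro i hi
    simp only [Finset.mem_range] at hi
    rcases Nat.eq_zero_or_pos i with h | h
    · simp [h, hα0]
    · exact (hαpos i h (by omega)).1
  have hαbar_le : ∀ u, u ≤ T → αbar u ≤ 1 := by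
    intro u hu
    induction u with
    | zero => simp [hαbar, hα0]
    | succ k ih =>
      rw [hαbar, Finset.prod_range_succ, ← hαbar]
      have h1 := hαbar_pos k (by omega)
      have h2 := hαpos (k+1) (by omega) hu
      nlinarith [ih (by omega)]
  have hαbar_lt : ∀ u, 1 ≤ u → u ≤ T → αbar u < 1 := by
    intro u h1 h2
    obtain ⟨k, rfl⟩ : ∃ k, u = k + 1 := ⟨u - 1, by omega⟩
    rw [hαbar, Finset.prod_range_succ, ← hαbar]
    have ha := hαbar_pos k (by omega)
    have hb := hαpos (k+1) h1 h2
    nlinarith [hαbar_le k (by omega)]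
  obtain ⟨s, rfl⟩ : ∃ s, t = s + 1 := ⟨t - 1, by omega⟩
  have hs1 : 1 ≤ s := by omega
  simp only [Nat.add_sub_cancel] at hμt hν ⊢
  have ha0 : 0 < α (s+1) := (hαpos (s+1) (by omega) htT).1
  have ha1 : α (s+1) < 1 := (hαpos (s+1) (by omega) htT).2
  have hb'0 : 0 < αbar s := hαbar_pos s (by omega)
  have hb'1 : αbar s < 1 := hαbar_lt s hs1 (by omega)
  have hb0 : 0 < αbar (s+1) := hαbar_pos (s+1) htT
  have hb1 : αbar (s+1) < 1 := hαbar_lt (s+1) (by omega) htT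
  have hbb' : αbar (s+1) = αbar s * α (s+1) := by
    rw [hαbar (s+1), Finset.prod_range_succ, ← hαbar]
  -- sqrt facts
  set a := α (s+1) with ha_def
  set b := αbar (s+1) with hb_def
  set b' := αbar s with hb'_def
  have hsa : (0:ℝ) < Real.sqrt a := Real.sqrt_pos.mpr ha0
  have hs1b : (0:ℝ) < Real.sqrt (1 - b) := Real.sqrt_pos.mpr (by linarith)
  have hs1b' : (0:ℝ) < Real.sqrt (1 - b') := Real.sqrt_pos.mpr (by linarith)
  have hsa2 : Real.sqrt a * Real.sqrt a = a := Real.mul_self_sqrt ha0.le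
  have hs1b2 : Real.sqrt (1-b) * Real.sqrt (1-b) = 1-b := Real.mul_self_sqrt (by linarith)
  have hs1b'2 : Real.sqrt (1-b') * Real.sqrt (1-b') = 1-b' := Real.mul_self_sqrt (by linarith)
  have hsb : Real.sqrt b = Real.sqrt a * Real.sqrt b' := by
    rw [hbb', mul_comm, Real.sqrt_mul ha0.le]
  -- ψ recurrence
  have hsum : Real.sqrt (1-b) * ψ (s+1)
      = Real.sqrt a * (Real.sqrt (1-b') * ψ s + γ (s+1)) := by
    rw [hψ (s+1) (by omega), hψ s hs1]
    rw [Finset.sum_Icc_succ_top (by omega : 1 ≤ s+1)]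
    have h1 : ∀ i, Real.sqrt (b / αbar (i-1)) = Real.sqrt a * Real.sqrt (b' / αbar (i-1)) := by
      intro i
      rw [← Real.sqrt_mul ha0.le]
      congr 1
      rw [hbb']
      ring
    have h2 : Real.sqrt (b / αbar (s+1-1)) = Real.sqrt a := by
      simp only [Nat.add_sub_cancel, ← hb'_def]
      rw [hbb', mul_comm, mul_div_assoc, div_self (by positivity), mul_one]
    simp only [← hb_def, ← hb'_def, h2]
    have h3 : ∑ i ∈ Finset.Icc 1 s, Real.sqrt (b / αbar (i-1)) * γ i
        = Real.sqrt a * ∑ i ∈ Finset.Icc 1 s, Real.sqrt (b' / αbar (i-1)) * γ i := by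
      rw [Finset.mul_sum]
      exact Finset.sum_congr rfl (fun i _ => by rw [h1]; ring)
    rw [h3]
    field_simp
  subst hμt hxt
  rw [hν (s+1) (by omega), hφ (s+1) (by omega)]
  simp only [Nat.add_sub_cancel, ← ha_def, ← hb_def, ← hb'_def]
  have h1b : (1:ℝ) - b ≠ 0 := by linarith
  have h1a : (1:ℝ) - a ≠ 0 := by linarith
  match_scalars
  · rw [hsb]
    field_simp
    linear_combination (1-b') * hsa2 + hbb'
  · field_simp
    linear_combination (σ₀ * Real.sqrt (1-b) * Real.sqrt (1-b) * (1-b')) * hsa2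
      + (σ₀ * (a-1)) * hs1b2
      + (σ₀ * Real.sqrt (1-b) * Real.sqrt (1-b)) * hbb'
  · have hψt : ψ (s+1) = Real.sqrt a * (Real.sqrt (1-b') * ψ s + γ (s+1)) / Real.sqrt (1-b) := by
      field_simp
      linarith [hsum]
    rw [hψt]
    field_simp
    linear_combination ((1-b') * (Real.sqrt (1-b') * ψ s + γ (s+1))) * hsa2
      + (Real.sqrt (1-b') * ψ s) * hbb'
end

section
/- (Proposition 2 of the paper.) Suppose the coefficients γ_1,…,γ_T satisfy φ_t = ψ_t for all t = 2,…,T. Then ν_t = 0 for all t = 2,…,T, and consequently for all vectors x_t, x_0, ξ ∈ ℝ^n the posterior mean μ̃_t(x_t, x_0, ξ) = (√α_t (1−ᾱ_{t−1})/(1−ᾱ_t)) x_t + ((1−α_t)√ᾱ_{t−1}/(1−ᾱ_t)) x_0 + ν_t ξ does not depend on ξ and equals the standard DDPM posterior mean (√α_t (1−ᾱ_{t−1})/(1−ᾱ_t)) x_t + ((1−α_t)√ᾱ_{t−1}/(1−ᾱ_t)) x_0. -/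
open Finset

/-- Proposition 2 of the paper: under the balanced-φ,ψ condition φ_t = ψ_t (2 ≤ t ≤ T),
one has ν_t = 0 and the posterior mean μ̃_t does not depend on ξ, coinciding with the
standard DDPM posterior mean. -/
theorem balanced_implies_nu_zero
    (T n : ℕ) (β α αbar γ φ ψ ν : ℕ → ℝ)
    (hβ : ∀ t, 1 ≤ t → t ≤ T → 0 < β t ∧ β t < 1)
    (hα0 : α 0 = 1)
    (hα : ∀ t, 1 ≤ t → α t = 1 - β t)
    (hαbar : ∀ t, αbar t = ∏ i ∈ Finset.range (t + 1), α i)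
    (hφ : ∀ t, 1 ≤ t →
      φ t = Real.sqrt (α t) * Real.sqrt (1 - αbar t) / (1 - α t) * γ t)
    (hψ : ∀ t, 1 ≤ t → ψ t = (1 / Real.sqrt (1 - αbar t)) *
      ∑ i ∈ Finset.Icc 1 t, Real.sqrt (αbar t / αbar (i - 1)) * γ i)
    (hν : ∀ t, 2 ≤ t → ν t =
      ((1 - α t) * Real.sqrt (1 - αbar (t - 1)) * ψ (t - 1)
        - α t * (1 - αbar (t - 1)) * γ t) / (1 - αbar t))
    (hbal : ∀ t, 2 ≤ t → t ≤ T → φ t = ψ t) :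
    ∀ t, 2 ≤ t → t ≤ T → (ν t = 0 ∧
      ∀ xt x₀ ξ : EuclideanSpace ℝ (Fin n),
        (Real.sqrt (α t) * (1 - αbar (t - 1)) / (1 - αbar t)) • xt
          + ((1 - α t) * Real.sqrt (αbar (t - 1)) / (1 - αbar t)) • x₀
          + ν t • ξ
        = (Real.sqrt (α t) * (1 - αbar (t - 1)) / (1 - αbar t)) • xt
          + ((1 - α t) * Real.sqrt (αbar (t - 1)) / (1 - αbar t)) • x₀) := by
  intro t ht2 htT
  -- basic positivity facts
  have hαpos : ∀ i, i ≤ T → 0 < α i := by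
    intro i hi
    rcases Nat.eq_zero_or_pos i with h | h
    · simp [h, hα0]
    · rw [hα i h]; have := hβ i h hi; linarith [this.2]
  have hαlt : ∀ i, 1 ≤ i → i ≤ T → α i < 1 := by
    intro i h1 hi; rw [hα i h1]; have := hβ i h1 hi; linarith [this.1]
  have hαbarpos : ∀ i, i ≤ T → 0 < αbar i := by
    intro i hi
    rw [hαbar]
    apply Finset.prod_pos
    intro j hj
    exact hαpos j (le_trans (Nat.lt_succ_iff.mp (Finset.mem_range.mp hj)) hi)
  have hαbarle : ∀ i, i ≤ T → αbar i ≤ 1 := by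
    intro i hi
    rw [hαbar]
    apply Finset.prod_le_one
    · intro j hj
      exact le_of_lt (hαpos j (le_trans (Nat.lt_succ_iff.mp (Finset.mem_range.mp hj)) hi))
    · intro j hj
      have hjT : j ≤ T := le_trans (Nat.lt_succ_iff.mp (Finset.mem_range.mp hj)) hi
      rcases Nat.eq_zero_or_pos j with h | h
      · simp [h, hα0]
      · exact le_of_lt (hαlt j h hjT)
  have hαbarsucc : ∀ i, αbar (i + 1) = α (i + 1) * αbar i := by
    intro i; rw [hαbar, hαbar, Finset.prod_range_succ]; ring
  have hαbarlt : ∀ i, 1 ≤ i → i ≤ T → αbar i < 1 := by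
    intro i h1 hi
    obtain ⟨j, rfl⟩ := Nat.exists_eq_add_of_le h1
    rw [Nat.add_comm] at *
    rw [hαbarsucc j]
    have h1 : αbar j ≤ 1 := hαbarle j (le_trans (Nat.le_succ j) hi)
    have h2 : α (j + 1) < 1 := hαlt (j + 1) (Nat.le_add_left 1 j) hi
    have h3 : 0 < α (j + 1) := hαpos (j + 1) hi
    nlinarith
  -- set s = t - 1
  obtain ⟨s, rfl⟩ : ∃ s, t = s + 1 := ⟨t - 1, (Nat.succ_pred_eq_of_pos (by omega)).symm⟩
  have hs1 : 1 ≤ s := by omega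
  have hsT : s ≤ T := by omega
  have hts : s + 1 - 1 = s := rfl
  -- abbreviations
  set a := α (s + 1) with ha_def
  have hapos : 0 < a := hαpos (s + 1) htT
  have halt : a < 1 := hαlt (s + 1) (by omega) htT
  have hbs : 0 < 1 - αbar s := by linarith [hαbarlt s hs1 hsT]
  have hbt : 0 < 1 - αbar (s + 1) := by linarith [hαbarlt (s + 1) (by omega) htT]
  have hbarspos : 0 < αbar s := hαbarpos s hsT
  -- the key sum recursion
  have hsum : (∑ i ∈ Finset.Icc 1 (s + 1), Real.sqrt (αbar (s + 1) / αbar (i - 1)) * γ i)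
      = Real.sqrt a * ((∑ i ∈ Finset.Icc 1 s, Real.sqrt (αbar s / αbar (i - 1)) * γ i) + γ (s + 1)) := by
    rw [Finset.sum_Icc_succ_top (by omega : 1 ≤ s + 1)]
    have hlast : Real.sqrt (αbar (s + 1) / αbar (s + 1 - 1)) = Real.sqrt a := by
      rw [hts, hαbarsucc s, mul_div_assoc, div_self (ne_of_gt hbarspos), mul_one]
    have hterm : ∀ i ∈ Finset.Icc 1 s,
        Real.sqrt (αbar (s + 1) / αbar (i - 1)) * γ i
          = Real.sqrt a * (Real.sqrt (αbar s / αbar (i - 1)) * γ i) := by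
      intro i hi
      rw [hαbarsucc s, mul_div_assoc, Real.sqrt_mul (le_of_lt hapos), mul_assoc]
    rw [Finset.sum_congr rfl hterm, ← Finset.mul_sum, hlast]
    ring
  -- extract the balance equation
  have hbalE := hbal (s + 1) ht2 htT
  rw [hφ (s + 1) (by omega), hψ (s + 1) (by omega), hsum] at hbalE
  set S := ∑ i ∈ Finset.Icc 1 s, Real.sqrt (αbar s / αbar (i - 1)) * γ i with hS_def
  have hsa : (0:ℝ) < Real.sqrt a := Real.sqrt_pos.mpr hapos
  have hsqt : (0:ℝ) < Real.sqrt (1 - αbar (s + 1)) := Real.sqrt_pos.mpr hbt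
  have hsqt2 : Real.sqrt (1 - αbar (s + 1)) ^ 2 = 1 - αbar (s + 1) := Real.sq_sqrt (le_of_lt hbt)
  -- derive (1-a) * S = a * (1 - αbar s) * γ (s+1)
  have hkey : (1 - a) * S = a * (1 - αbar s) * γ (s + 1) := by
    have h1a : (1:ℝ) - a ≠ 0 := by linarith
    field_simp at hbalE
    have h2 : (1 - αbar (s + 1)) * γ (s + 1) = (1 - a) * (S + γ (s + 1)) := by
      apply mul_left_cancel₀ (ne_of_gt hsa)
      rw [← hsqt2, ha_def]
      rw [div_eq_iff (by rw [← ha_def]; exact h1a), ← ha_def] at hbalE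
      rw [← ha_def]
      linear_combination hbalE
    have h3 : αbar (s + 1) = a * αbar s := hαbarsucc s
    linear_combination -h2 - γ (s + 1) * h3
  -- ν = 0
  have hψs : Real.sqrt (1 - αbar s) * ψ s = S := by
    rw [hψ s hs1]
    have h : Real.sqrt (1 - αbar s) ≠ 0 := ne_of_gt (Real.sqrt_pos.mpr hbs)
    rw [← mul_assoc, mul_one_div, div_self h, one_mul]
  have hν0 : ν (s + 1) = 0 := by
    rw [hν (s + 1) ht2, hts, ← ha_def]
    rw [show (1 - a) * Real.sqrt (1 - αbar s) * ψ s = (1 - a) * (Real.sqrt (1 - αbar s) * ψ s) by ring,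
      hψs, hkey]
    ring
  refine ⟨hν0, fun xt x₀ ξ => ?_⟩
  rw [hν0, zero_smul, add_zero]
end

section
/- (Correctness of Algorithm 1, the balanced-φ,ψ strategy.) Define γ̂_1 = 1 and recursively γ̂_t = ((1−α_t) √ᾱ_{t−1} / (α_t (1−ᾱ_{t−1}))) Σ_{i=1}^{t−1} γ̂_i / √ᾱ_{i−1} for t = 2,…,T, and set ψ̂_T = (1/√(1−ᾱ_T)) Σ_{i=1}^T √(ᾱ_T/ᾱ_{i−1}) γ̂_i. Then γ̂_t > 0 for all t (so ψ̂_T > 0), and the rescaled coefficients γ_t := γ̂_t / ψ̂_T satisfy φ_t = ψ_t for all t = 1,…,T and ψ_T = 1. -/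
open Finset

/-- Correctness of Algorithm 1 (the balanced-φ,ψ strategy): the recursively constructed
γ̂_t are positive (hence ψ̂_T > 0), and the rescaled coefficients γ_t = γ̂_t / ψ̂_T
satisfy φ_t = ψ_t for all 1 ≤ t ≤ T and ψ_T = 1. -/
theorem algorithm1_correct
    (T : ℕ) (hT : 1 ≤ T) (β α αbar γhat γ φ ψ : ℕ → ℝ) (ψhatT : ℝ)
    (hβ : ∀ t, 1 ≤ t → t ≤ T → 0 < β t ∧ β t < 1)
    (hα0 : α 0 = 1)
    (hα : ∀ t, 1 ≤ t → α t = 1 - β t)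
    (hαbar : ∀ t, αbar t = ∏ i ∈ Finset.range (t + 1), α i)
    (hγhat1 : γhat 1 = 1)
    (hγhat : ∀ t, 2 ≤ t → t ≤ T →
      γhat t = (1 - α t) * Real.sqrt (αbar (t - 1)) / (α t * (1 - αbar (t - 1))) *
        ∑ i ∈ Finset.Icc 1 (t - 1), γhat i / Real.sqrt (αbar (i - 1)))
    (hψhatT : ψhatT = (1 / Real.sqrt (1 - αbar T)) *
      ∑ i ∈ Finset.Icc 1 T, Real.sqrt (αbar T / αbar (i - 1)) * γhat i)
    (hγ : ∀ t, 1 ≤ t → t ≤ T → γ t = γhat t / ψhatT)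
    (hφ : ∀ t, 1 ≤ t →
      φ t = Real.sqrt (α t) * Real.sqrt (1 - αbar t) / (1 - α t) * γ t)
    (hψ : ∀ t, 1 ≤ t → ψ t = (1 / Real.sqrt (1 - αbar t)) *
      ∑ i ∈ Finset.Icc 1 t, Real.sqrt (αbar t / αbar (i - 1)) * γ i) :
    (∀ t, 1 ≤ t → t ≤ T → 0 < γhat t) ∧ 0 < ψhatT ∧
    (∀ t, 1 ≤ t → t ≤ T → φ t = ψ t) ∧ ψ T = 1 := by
  have hαbar0 : αbar 0 = 1 := by rw [hαbar]; simp [hα0]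
  have hαpos : ∀ t, 1 ≤ t → t ≤ T → 0 < α t ∧ α t < 1 := by
    intro t h1 h2
    rw [hα t h1]
    have := hβ t h1 h2
    constructor <;> linarith [this.1, this.2]
  have hαbar_succ : ∀ t, αbar (t + 1) = αbar t * α (t + 1) := by
    intro t; rw [hαbar, hαbar, Finset.prod_range_succ]
  have hαbar_pos : ∀ t, t ≤ T → 0 < αbar t ∧ αbar t ≤ 1 := by
    intro t
    induction t with
    | zero => intro _; rw [hαbar0]; norm_num
    | succ n ih =>
      intro h
      have hn := ih (le_trans (Nat.le_succ n) h)
      have ha := hαpos (n + 1) (by omega) h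
      rw [hαbar_succ]
      constructor
      · exact mul_pos hn.1 ha.1
      · nlinarith [hn.1, hn.2, ha.1, ha.2]
  have hαbar_lt : ∀ t, 1 ≤ t → t ≤ T → αbar t < 1 := by
    intro t h1 h2
    obtain ⟨n, rfl⟩ : ∃ n, t = n + 1 := ⟨t - 1, by omega⟩
    have hn := hαbar_pos n (by omega)
    have ha := hαpos (n + 1) (by omega) h2
    rw [hαbar_succ]
    nlinarith [hn.1, hn.2, ha.1, ha.2]
  -- positivity of γhat
  have hγpos : ∀ t, 1 ≤ t → t ≤ T → 0 < γhat t := by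
    intro t
    induction t using Nat.strong_induction_on with
    | _ t ih =>
      intro h1 h2
      rcases eq_or_lt_of_le h1 with h | h
      · rw [← h, hγhat1]; norm_num
      · have h2' : 2 ≤ t := h
        rw [hγhat t h2' h2]
        have hb := hαbar_pos (t - 1) (by omega)
        have hblt := hαbar_lt (t - 1) (by omega) (by omega)
        have ha := hαpos t (by omega) h2
        have hsum : 0 < ∑ i ∈ Finset.Icc 1 (t - 1), γhat i / Real.sqrt (αbar (i - 1)) := by
          apply Finset.sum_pos
          · intro i hi
            simp only [Finset.mem_Icc] at hi
            have hγi := ih i (by omega) (by omega) (by omega)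
            have hbi := hαbar_pos (i - 1) (by omega)
            exact div_pos hγi (Real.sqrt_pos.mpr hbi.1)
          · exact ⟨1, by simp [Finset.mem_Icc]; omega⟩
        have hc : 0 < (1 - α t) * Real.sqrt (αbar (t - 1)) / (α t * (1 - αbar (t - 1))) := by
          apply div_pos
          · exact mul_pos (by linarith [ha.2]) (Real.sqrt_pos.mpr hb.1)
          · exact mul_pos ha.1 (by linarith)
        exact mul_pos hc hsum
  -- key identity for γhat
  have key : ∀ t, 1 ≤ t → t ≤ T →
      Real.sqrt (α t) * (1 - αbar t) / (1 - α t) * γhat t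
        = ∑ i ∈ Finset.Icc 1 t, Real.sqrt (αbar t / αbar (i - 1)) * γhat i := by
    intro t h1 h2
    rcases eq_or_lt_of_le h1 with h | h
    · subst h
      have ha := hαpos 1 le_rfl h2
      have hab1 : αbar 1 = α 1 := by
        rw [show (1:ℕ) = 0 + 1 from rfl, hαbar_succ, hαbar0]; ring
      have ha1 : 1 - α 1 ≠ 0 := by linarith [ha.2]
      rw [Finset.Icc_self, Finset.sum_singleton]
      simp only [Nat.sub_self, hαbar0, hab1, hγhat1, div_one]
      field_simp
    · have h2' : 2 ≤ t := h
      obtain ⟨s, rfl⟩ : ∃ s, t = s + 1 := ⟨t - 1, by omega⟩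
      have hs1 : 1 ≤ s := by omega
      have ha := hαpos (s + 1) (by omega) h2
      have hb := hαbar_pos s (by omega)
      have hblt := hαbar_lt s hs1 (by omega)
      have hrec := hγhat (s + 1) h2' h2
      simp only [Nat.add_sub_cancel] at hrec
      -- split the sum
      rw [Finset.sum_Icc_succ_top (by omega : 1 ≤ s + 1)]
      -- rewrite each sqrt in the sum
      have hsplit : ∀ i ∈ Finset.Icc 1 s,
          Real.sqrt (αbar (s + 1) / αbar (i - 1)) * γhat i
            = Real.sqrt (α (s + 1)) * Real.sqrt (αbar s) * (γhat i / Real.sqrt (αbar (i - 1))) := by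
        intro i hi
        simp only [Finset.mem_Icc] at hi
        have hbi := hαbar_pos (i - 1) (by omega)
        rw [hαbar_succ, Real.sqrt_div (le_of_lt (mul_pos hb.1 ha.1)),
          Real.sqrt_mul (le_of_lt hb.1)]
        field_simp
      rw [Finset.sum_congr rfl hsplit, ← Finset.mul_sum]
      have htop : Real.sqrt (αbar (s + 1) / αbar (s + 1 - 1)) = Real.sqrt (α (s + 1)) := by
        simp only [Nat.add_sub_cancel]
        rw [hαbar_succ, mul_comm, mul_div_assoc, div_self (ne_of_gt hb.1), mul_one]
      rw [htop, hrec, hαbar_succ]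
      set S := ∑ i ∈ Finset.Icc 1 s, γhat i / Real.sqrt (αbar (i - 1)) with hS
      have ha0 : α (s + 1) ≠ 0 := ne_of_gt ha.1
      have ha1 : 1 - α (s + 1) ≠ 0 := by linarith [ha.2]
      have hb1 : 1 - αbar s ≠ 0 := by linarith
      field_simp
      ring
  have hψT_pos : 0 < ψhatT := by
    rw [hψhatT]
    have hb := hαbar_pos T le_rfl
    have hblt := hαbar_lt T hT le_rfl
    apply mul_pos
    · rw [one_div]
      exact inv_pos.mpr (Real.sqrt_pos.mpr (by linarith))
    · apply Finset.sum_pos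
      · intro i hi
        simp only [Finset.mem_Icc] at hi
        have hbi := hαbar_pos (i - 1) (by omega)
        exact mul_pos (Real.sqrt_pos.mpr (div_pos hb.1 hbi.1)) (hγpos i hi.1 hi.2)
      · exact ⟨1, by simp [Finset.mem_Icc]; omega⟩
  refine ⟨hγpos, hψT_pos, ?_, ?_⟩
  · intro t h1 h2
    have ha := hαpos t h1 h2
    have hblt := hαbar_lt t h1 h2
    have hc0 : (0:ℝ) < 1 - αbar t := by linarith
    have hsc : Real.sqrt (1 - αbar t) * Real.sqrt (1 - αbar t) = 1 - αbar t :=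
      Real.mul_self_sqrt hc0.le
    have hsum : ∑ i ∈ Finset.Icc 1 t, Real.sqrt (αbar t / αbar (i - 1)) * γ i
        = (Real.sqrt (α t) * (1 - αbar t) / (1 - α t) * γhat t) / ψhatT := by
      rw [key t h1 h2, Finset.sum_div]
      apply Finset.sum_congr rfl
      intro i hi
      simp only [Finset.mem_Icc] at hi
      rw [hγ i hi.1 (le_trans hi.2 h2)]
      ring
    rw [hφ t h1, hψ t h1, hsum, hγ t h1 h2]
    have hsc0 : Real.sqrt (1 - αbar t) ≠ 0 := by
      intro h; rw [h] at hsc; nlinarith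
    have ha1 : 1 - α t ≠ 0 := by linarith [ha.2]
    have hψ0 : ψhatT ≠ 0 := ne_of_gt hψT_pos
    field_simp
    linear_combination (Real.sqrt (α t) * γhat t) * hsc
  · rw [hψ T hT]
    have hsum : ∑ i ∈ Finset.Icc 1 T, Real.sqrt (αbar T / αbar (i - 1)) * γ i
        = (∑ i ∈ Finset.Icc 1 T, Real.sqrt (αbar T / αbar (i - 1)) * γhat i) / ψhatT := by
      rw [Finset.sum_div]
      apply Finset.sum_congr rfl
      intro i hi
      simp only [Finset.mem_Icc] at hi
      rw [hγ i hi.1 hi.2]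
      ring
    rw [hsum, ← mul_div_assoc, ← hψhatT, div_self (ne_of_gt hψT_pos)]
end

section
/- (Marginal law of the forward process, scalar version of Eq. (13)–(14).) Fix x_0, ξ ∈ ℝ and σ_0 > 0. Define a sequence of probability measures on ℝ by μ_0 = δ_{x_0} and, for t = 1,…,T, let μ_t be the law of √α_t · (X_{t−1} + γ_t ξ) + E_t, where X_{t−1} has law μ_{t−1} and E_t is an independent Gaussian with mean 0 and variance (1−α_t) σ_0². Then for every t = 1,…,T, μ_t is the Gaussian measure on ℝ with mean √ᾱ_t · x_0 + √(1−ᾱ_t) · ψ_t · ξ and variance (1−ᾱ_t) σ_0². -/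
open Finset MeasureTheory ProbabilityTheory Real
open scoped NNReal

lemma pdf_mul_pdf (m y : ℝ) (v1 v2 : ℝ≥0) (h1 : v1 ≠ 0) (h2 : v2 ≠ 0) (x : ℝ) :
    gaussianPDFReal m v1 x * gaussianPDFReal x v2 y =
      gaussianPDFReal m (v1 + v2) y *
        gaussianPDFReal (((v1:ℝ) * y + (v2:ℝ) * m) / ((v1:ℝ) + v2)) (v1 * v2 / (v1 + v2)) x := by
  have hv1 : 0 < (v1:ℝ) := NNReal.coe_pos.mpr h1.bot_lt
  have hv2 : 0 < (v2:ℝ) := NNReal.coe_pos.mpr h2.bot_lt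
  have hv12 : 0 < (v1:ℝ) + v2 := by linarith
  unfold gaussianPDFReal
  push_cast [NNReal.coe_div, NNReal.coe_mul, NNReal.coe_add]
  rw [mul_mul_mul_comm, ← Real.exp_add, mul_mul_mul_comm, ← Real.exp_add,
    ← mul_inv, ← mul_inv, ← Real.sqrt_mul (by positivity), ← Real.sqrt_mul (by positivity)]
  congr 2
  · congr 1
    field_simp
  · field_simp
    ring

lemma measurable_pdf2 (v2 : ℝ≥0) : Measurable (fun p : ℝ × ℝ => gaussianPDF p.1 v2 p.2) := by
  unfold gaussianPDF gaussianPDFReal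
  fun_prop

lemma gaussianReal_conv (m : ℝ) (v1 v2 : ℝ≥0) (h2 : v2 ≠ 0) :
    Measure.conv (gaussianReal m v1) (gaussianReal 0 v2) = gaussianReal m (v1 + v2) := by
  classical
  by_cases h1 : v1 = 0
  · subst h1
    rw [gaussianReal_zero_var, zero_add]
    show Measure.map _ _ = _
    rw [Measure.dirac_prod, Measure.map_map (by fun_prop) (by fun_prop)]
    have : ((fun p : ℝ × ℝ => p.1 + p.2) ∘ Prod.mk m) = (fun x => m + x) := rfl
    rw [this, gaussianReal_map_const_add, zero_add]
  · ext s hs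
    have h12 : v1 + v2 ≠ 0 := by simp [h1]
    have hw : v1 * v2 / (v1 + v2) ≠ 0 := div_ne_zero (mul_ne_zero h1 h2) h12
    show Measure.map (fun p : ℝ × ℝ => p.1 + p.2) _ s = _
    rw [Measure.map_apply (by fun_prop) hs, Measure.prod_apply (by exact measurable_add hs)]
    have key : ∀ x : ℝ, (gaussianReal 0 v2) (Prod.mk x ⁻¹' ((fun p : ℝ × ℝ => p.1 + p.2) ⁻¹' s))
        = ∫⁻ y in s, gaussianPDF x v2 y := by
      intro x
      have : Prod.mk x ⁻¹' ((fun p : ℝ × ℝ => p.1 + p.2) ⁻¹' s) = (fun y => x + y) ⁻¹' s := rfl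
      rw [this, ← Measure.map_apply (by fun_prop) hs, gaussianReal_map_const_add, zero_add,
        gaussianReal_apply _ h2]
    simp_rw [key]
    have hmeas : Measurable fun x : ℝ => ∫⁻ y in s, gaussianPDF x v2 y := by
      have e : ∀ x : ℝ, ∫⁻ y in s, gaussianPDF x v2 y = ∫⁻ y, s.indicator (gaussianPDF x v2) y :=
        fun x => (lintegral_indicator hs _).symm
      simp_rw [e]
      apply Measurable.lintegral_prod_right (f := fun x y => s.indicator (gaussianPDF x v2) y)
      have : (Function.uncurry fun x y => s.indicator (gaussianPDF x v2) y)
          = fun p : ℝ × ℝ => if p.2 ∈ s then gaussianPDF p.1 v2 p.2 else 0 := by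
        ext p; simp [Function.uncurry, Set.indicator_apply]
      rw [this]
      exact Measurable.ite (measurable_snd hs) (measurable_pdf2 v2) measurable_const
    rw [gaussianReal_of_var_ne_zero _ h1,
      lintegral_withDensity_eq_lintegral_mul _ (measurable_gaussianPDF _ _) hmeas]
    have hpull : ∀ x : ℝ, gaussianPDF m v1 x * ∫⁻ y in s, gaussianPDF x v2 y
        = ∫⁻ y in s, gaussianPDF m v1 x * gaussianPDF x v2 y := fun x =>
      (lintegral_const_mul _ (measurable_gaussianPDF x v2)).symm
    simp only [Pi.mul_apply]
    simp_rw [hpull]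
    rw [lintegral_lintegral_swap]
    · have hpt : ∀ y x : ℝ, gaussianPDF m v1 x * gaussianPDF x v2 y
          = gaussianPDF m (v1 + v2) y *
            gaussianPDF (((v1:ℝ) * y + (v2:ℝ) * m) / ((v1:ℝ) + v2)) (v1 * v2 / (v1 + v2)) x := by
        intro y x
        simp only [gaussianPDF]
        rw [← ENNReal.ofReal_mul (gaussianPDFReal_nonneg _ _ _),
          ← ENNReal.ofReal_mul (gaussianPDFReal_nonneg _ _ _), pdf_mul_pdf m y v1 v2 h1 h2 x]
      simp_rw [hpt]
      have : ∀ y : ℝ, ∫⁻ x, gaussianPDF m (v1 + v2) y *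
          gaussianPDF (((v1:ℝ) * y + (v2:ℝ) * m) / ((v1:ℝ) + v2)) (v1 * v2 / (v1 + v2)) x
          = gaussianPDF m (v1 + v2) y := by
        intro y
        rw [lintegral_const_mul _ (measurable_gaussianPDF _ _),
          lintegral_gaussianPDF_eq_one _ hw, mul_one]
      simp_rw [this]
      rw [gaussianReal_apply _ h12]
    · apply Measurable.aemeasurable
      have : (Function.uncurry fun x y => gaussianPDF m v1 x * gaussianPDF x v2 y)
          = fun p : ℝ × ℝ => gaussianPDF m v1 p.1 * gaussianPDF p.1 v2 p.2 := rfl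
      rw [this]
      exact ((measurable_gaussianPDF m v1).comp measurable_fst).mul (measurable_pdf2 v2)

lemma gaussianReal_map_affine (m : ℝ) (v : ℝ≥0) (a c : ℝ) (ha : 0 ≤ a) :
    (gaussianReal m v).map (fun x => Real.sqrt a * (x + c)) =
      gaussianReal (Real.sqrt a * (m + c)) (a.toNNReal * v) := by
  have hc : (fun x : ℝ => Real.sqrt a * (x + c))
      = (fun y : ℝ => Real.sqrt a * y) ∘ (fun x : ℝ => x + c) := rfl
  rw [hc, ← Measure.map_map (by fun_prop) (by fun_prop), gaussianReal_map_add_const,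
    gaussianReal_map_const_mul]
  congr 1
  exact NNReal.eq (by simp [Real.sq_sqrt ha, Real.coe_toNNReal _ ha])

/-- Marginal law of the forward process (scalar version of Eqs. (13)–(14)):
starting from μ_0 = δ_{x_0} and setting μ_t to be the law of
√α_t (X_{t−1} + γ_t ξ) + E_t with X_{t−1} ~ μ_{t−1} independent of the Gaussian
E_t ~ N(0, (1−α_t)σ_0²), one has μ_t = N(√ᾱ_t x_0 + √(1−ᾱ_t) ψ_t ξ, (1−ᾱ_t)σ_0²). -/
theorem forward_marginal_gaussian
    (T : ℕ) (β α αbar γ ψ : ℕ → ℝ)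
    (hβ : ∀ t, 1 ≤ t → t ≤ T → 0 < β t ∧ β t < 1)
    (hα0 : α 0 = 1)
    (hα : ∀ t, 1 ≤ t → α t = 1 - β t)
    (hαbar : ∀ t, αbar t = ∏ i ∈ Finset.range (t + 1), α i)
    (hψ : ∀ t, 1 ≤ t → ψ t = (1 / Real.sqrt (1 - αbar t)) *
      ∑ i ∈ Finset.Icc 1 t, Real.sqrt (αbar t / αbar (i - 1)) * γ i)
    (x₀ ξ σ₀ : ℝ) (hσ₀ : 0 < σ₀)
    (μ : ℕ → Measure ℝ)
    (hμ0 : μ 0 = Measure.dirac x₀)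
    (hμ : ∀ t, 1 ≤ t → t ≤ T →
      μ t = Measure.conv
        (Measure.map (fun x => Real.sqrt (α t) * (x + γ t * ξ)) (μ (t - 1)))
        (gaussianReal 0 (((1 - α t) * σ₀ ^ 2).toNNReal))) :
    ∀ t, 1 ≤ t → t ≤ T →
      μ t = gaussianReal (Real.sqrt (αbar t) * x₀ + Real.sqrt (1 - αbar t) * ψ t * ξ)
        (((1 - αbar t) * σ₀ ^ 2).toNNReal) := by
  have hαpos : ∀ i, 1 ≤ i → i ≤ T → 0 < α i ∧ α i < 1 := by
    intro i h1 h2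
    obtain ⟨hb1, hb2⟩ := hβ i h1 h2
    rw [hα i h1]; constructor <;> linarith
  have hfac : ∀ i, i ≤ T → 0 < α i ∧ α i ≤ 1 := by
    intro i hi
    rcases Nat.eq_zero_or_pos i with h | h
    · subst h; rw [hα0]; exact ⟨one_pos, le_refl 1⟩
    · exact ⟨(hαpos i h hi).1, (hαpos i h hi).2.le⟩
  have hbar : ∀ t, t ≤ T → 0 < αbar t ∧ αbar t ≤ 1 := by
    intro t ht
    rw [hαbar t]
    constructor
    · exact Finset.prod_pos fun i hi =>
        (hfac i (le_trans (Nat.lt_succ_iff.mp (Finset.mem_range.mp hi)) ht)).1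
    · exact Finset.prod_le_one
        (fun i hi => (hfac i (le_trans (Nat.lt_succ_iff.mp (Finset.mem_range.mp hi)) ht)).1.le)
        (fun i hi => (hfac i (le_trans (Nat.lt_succ_iff.mp (Finset.mem_range.mp hi)) ht)).2)
  have hrec : ∀ t, αbar (t + 1) = αbar t * α (t + 1) := by
    intro t
    rw [hαbar, hαbar, Finset.prod_range_succ]
  have hbarlt : ∀ t, 1 ≤ t → t ≤ T → αbar t < 1 := by
    intro t h1 h2
    obtain ⟨u, rfl⟩ : ∃ u, t = u + 1 := ⟨t - 1, (Nat.succ_pred_eq_of_pos h1).symm⟩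
    rw [hrec u]
    obtain ⟨hp, hl⟩ := hbar u (by omega)
    have := (hαpos (u + 1) (by omega) h2).2
    nlinarith
  have key : ∀ t, t ≤ T → μ t = gaussianReal
      (Real.sqrt (αbar t) * x₀ + (∑ i ∈ Finset.Icc 1 t,
        Real.sqrt (αbar t / αbar (i - 1)) * γ i) * ξ)
      (((1 - αbar t) * σ₀ ^ 2).toNNReal) := by
    intro t
    induction t with
    | zero =>
      intro _
      have hb0 : αbar 0 = 1 := by rw [hαbar]; simp [hα0]
      rw [hμ0]
      simp [hb0]
    | succ t ih =>
      intro hT'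
      have ht1 : t ≤ T := Nat.le_of_succ_le hT'
      have haprop := hαpos (t + 1) (by omega) hT'
      have hbprop := hbar t ht1
      have hb1prop := hbar (t + 1) hT'
      have hv2ne : ((1 - α (t + 1)) * σ₀ ^ 2).toNNReal ≠ 0 := by
        simp only [ne_eq, Real.toNNReal_eq_zero, not_le]
        have h : (0:ℝ) < 1 - α (t + 1) := by linarith [haprop.2]
        positivity
      rw [hμ (t + 1) (by omega) hT']
      simp only [Nat.add_sub_cancel]
      rw [ih ht1, gaussianReal_map_affine _ _ (α (t + 1)) (γ (t + 1) * ξ) haprop.1.le,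
        gaussianReal_conv _ _ _ hv2ne]
      have hsq : Real.sqrt (αbar (t + 1)) = Real.sqrt (αbar t) * Real.sqrt (α (t + 1)) := by
        rw [hrec t, Real.sqrt_mul hbprop.1.le]
      have hS : ∑ i ∈ Finset.Icc 1 (t + 1), Real.sqrt (αbar (t + 1) / αbar (i - 1)) * γ i
          = Real.sqrt (α (t + 1)) *
            ((∑ i ∈ Finset.Icc 1 t, Real.sqrt (αbar t / αbar (i - 1)) * γ i) + γ (t + 1)) := by
        rw [Finset.sum_Icc_succ_top (by omega), mul_add, Finset.mul_sum]
        congr 1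
        · refine Finset.sum_congr rfl fun i hi => ?_
          have hq : αbar (t + 1) / αbar (i - 1) = α (t + 1) * (αbar t / αbar (i - 1)) := by
            rw [hrec t]; ring
          rw [hq, Real.sqrt_mul haprop.1.le, mul_assoc]
        · have hq : αbar (t + 1) / αbar t = α (t + 1) := by
            rw [hrec t, mul_comm, mul_div_assoc, div_self hbprop.1.ne', mul_one]
          simp [hq]
      congr 1
      · rw [hS, hsq]; ring
      · apply NNReal.eq
        push_cast [Real.coe_toNNReal _ (by nlinarith [haprop.1, hbprop.2, hbprop.1] : (0:ℝ) ≤ (1 - αbar (t+1)) * σ₀ ^ 2),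
          Real.coe_toNNReal _ (by nlinarith [hbprop.2] : (0:ℝ) ≤ (1 - αbar t) * σ₀ ^ 2),
          Real.coe_toNNReal _ (by nlinarith [haprop.2] : (0:ℝ) ≤ (1 - α (t+1)) * σ₀ ^ 2),
          Real.coe_toNNReal _ haprop.1.le]
        rw [hrec t]; ring
  intro t h1 h2
  rw [key t h2]
  have hne : Real.sqrt (1 - αbar t) ≠ 0 :=
    Real.sqrt_ne_zero'.mpr (by linarith [hbarlt t h1 h2])
  rw [hψ t h1]
  congr 2
  field_simp
end

section
/- (Gaussian posterior identity, scalar version of Eqs. (25)–(28).) Fix t with 2 ≤ t ≤ T, reals x_0, ξ, σ_0 with σ_0 > 0, and let g(m, v)(x) = (2πv)^{−1/2} exp(−(x−m)²/(2v)) denote the Gaussian density. Set μ̃_t(x_t, x_0, ξ) = (√α_t (1−ᾱ_{t−1})/(1−ᾱ_t)) x_t + ((1−α_t)√ᾱ_{t−1}/(1−ᾱ_t)) x_0 + ν_t ξ and β̃_t = ((1−α_t)(1−ᾱ_{t−1})/(1−ᾱ_t)) σ_0². Then for all x_t, x_{t−1} ∈ ℝ: g(√α_t (x_{t−1} + γ_t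 ξ), (1−α_t) σ_0²)(x_t) · g(√ᾱ_{t−1} x_0 + √(1−ᾱ_{t−1}) ψ_{t−1} ξ, (1−ᾱ_{t−1}) σ_0²)(x_{t−1}) = g(μ̃_t(x_t, x_0, ξ), β̃_t)(x_{t−1}) · g(√ᾱ_t x_0 + √(1−ᾱ_t) ψ_t ξ, (1−ᾱ_t) σ_0²)(x_t). -/
open Finset

/-- Gaussian density with mean m and variance v. -/
noncomputable def gaussDensity (m v x : ℝ) : ℝ :=
  (Real.sqrt (2 * Real.pi * v))⁻¹ * Real.exp (-(x - m) ^ 2 / (2 * v))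

lemma gauss_key (s r σ C γ x₀ ξ xt xm : ℝ)
    (hs0 : 0 < s) (hs1 : s < 1) (hr0 : 0 < r) (hr1 : r < 1) (hσ : 0 < σ) :
    gaussDensity (s * (xm + γ * ξ)) ((1 - s^2) * σ^2) xt *
      gaussDensity (r * x₀ + C * ξ) ((1 - r^2) * σ^2) xm
    = gaussDensity (s * (1 - r^2) / (1 - s^2*r^2) * xt + (1 - s^2) * r / (1 - s^2*r^2) * x₀
        + (((1-s^2)*C - s^2*(1-r^2)*γ)/(1-s^2*r^2)) * ξ)
        ((1 - s^2) * (1 - r^2) / (1 - s^2*r^2) * σ^2) xm *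
      gaussDensity (s*r * x₀ + s*(C+γ) * ξ) ((1 - s^2*r^2) * σ^2) xt := by
  have h1 : (0:ℝ) < 1 - s^2 := by nlinarith
  have h2 : (0:ℝ) < 1 - r^2 := by nlinarith
  have h3 : (0:ℝ) < 1 - s^2*r^2 := by nlinarith
  have hσ2 : (0:ℝ) < σ^2 := by positivity
  have hπ : (0:ℝ) < Real.pi := Real.pi_pos
  unfold gaussDensity
  rw [mul_mul_mul_comm, mul_mul_mul_comm _ (Real.exp _)]
  congr 1
  · rw [← mul_inv, ← mul_inv, ← Real.sqrt_mul (by positivity), ← Real.sqrt_mul (by positivity)]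
    congr 1
    field_simp
  · rw [← Real.exp_add, ← Real.exp_add]
    congr 1
    field_simp
    ring

/-- Gaussian posterior identity (scalar version of Eqs. (25)–(28)):
q(x_t | x_{t−1}, ξ) q(x_{t−1} | x_0, ξ) = q(x_{t−1} | x_t, x_0, ξ) q(x_t | x_0, ξ). -/
theorem gaussian_posterior_identity
    (T : ℕ) (β α αbar γ ψ ν : ℕ → ℝ)
    (hβ : ∀ t, 1 ≤ t → t ≤ T → 0 < β t ∧ β t < 1)
    (hα0 : α 0 = 1)
    (hα : ∀ t, 1 ≤ t → α t = 1 - β t)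
    (hαbar : ∀ t, αbar t = ∏ i ∈ Finset.range (t + 1), α i)
    (hψ : ∀ t, 1 ≤ t → ψ t = (1 / Real.sqrt (1 - αbar t)) *
      ∑ i ∈ Finset.Icc 1 t, Real.sqrt (αbar t / αbar (i - 1)) * γ i)
    (hν : ∀ t, 2 ≤ t → ν t =
      ((1 - α t) * Real.sqrt (1 - αbar (t - 1)) * ψ (t - 1)
        - α t * (1 - αbar (t - 1)) * γ t) / (1 - αbar t))
    (t : ℕ) (ht2 : 2 ≤ t) (htT : t ≤ T)
    (x₀ ξ σ₀ : ℝ) (hσ₀ : 0 < σ₀) :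
    ∀ xt xtm1 : ℝ,
      gaussDensity (Real.sqrt (α t) * (xtm1 + γ t * ξ)) ((1 - α t) * σ₀ ^ 2) xt *
        gaussDensity (Real.sqrt (αbar (t - 1)) * x₀
            + Real.sqrt (1 - αbar (t - 1)) * ψ (t - 1) * ξ)
          ((1 - αbar (t - 1)) * σ₀ ^ 2) xtm1
      = gaussDensity
          (Real.sqrt (α t) * (1 - αbar (t - 1)) / (1 - αbar t) * xt
            + (1 - α t) * Real.sqrt (αbar (t - 1)) / (1 - αbar t) * x₀
            + ν t * ξ)
          ((1 - α t) * (1 - αbar (t - 1)) / (1 - αbar t) * σ₀ ^ 2) xtm1 *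
        gaussDensity (Real.sqrt (αbar t) * x₀ + Real.sqrt (1 - αbar t) * ψ t * ξ)
          ((1 - αbar t) * σ₀ ^ 2) xt := by
  intro xt xtm1
  -- basic facts about α
  have hαpos : ∀ u, 1 ≤ u → u ≤ T → 0 < α u ∧ α u < 1 := by
    intro u h1 h2
    rw [hα u h1]
    obtain ⟨b1, b2⟩ := hβ u h1 h2
    constructor <;> linarith
  have hbar0 : αbar 0 = 1 := by
    rw [hαbar 0]; simp [hα0]
  have hbarstep : ∀ u, αbar (u + 1) = αbar u * α (u + 1) := by
    intro u
    rw [hαbar u, hαbar (u + 1), Finset.prod_range_succ]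
  -- positivity of αbar
  have hbarpos : ∀ u, u ≤ T → 0 < αbar u ∧ αbar u ≤ 1 := by
    intro u hu
    induction u with
    | zero => rw [hbar0]; norm_num
    | succ n ih =>
      have hn : n ≤ T := Nat.le_of_succ_le hu
      obtain ⟨p1, p2⟩ := ih hn
      obtain ⟨q1, q2⟩ := hαpos (n + 1) (Nat.succ_le_succ (Nat.zero_le n)) hu
      rw [hbarstep n]
      constructor
      · positivity
      · nlinarith
  have hbarlt1 : ∀ u, 1 ≤ u → u ≤ T → αbar u < 1 := by
    intro u h1 h2
    obtain ⟨n, rfl⟩ := Nat.exists_eq_add_of_le h1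
    rw [add_comm] at *
    rw [hbarstep n]
    obtain ⟨p1, p2⟩ := hbarpos n (Nat.le_of_succ_le h2)
    obtain ⟨q1, q2⟩ := hαpos (n + 1) (Nat.succ_le_succ (Nat.zero_le n)) h2
    nlinarith
  -- specialize to t
  have ht1 : 1 ≤ t := le_trans one_le_two ht2
  have htm1T : t - 1 ≤ T := le_trans (Nat.sub_le t 1) htT
  have htm11 : 1 ≤ t - 1 := Nat.le_sub_one_of_lt ht2
  obtain ⟨ha0, ha1⟩ := hαpos t ht1 htT
  obtain ⟨hb0, _⟩ := hbarpos (t - 1) htm1T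
  have hb1 : αbar (t - 1) < 1 := hbarlt1 (t - 1) htm11 htm1T
  have htsucc : t = (t - 1) + 1 := (Nat.succ_pred_eq_of_pos (by omega)).symm
  have hbart : αbar t = αbar (t - 1) * α t := by
    conv_lhs => rw [htsucc, hbarstep (t - 1), ← htsucc]
  obtain ⟨hc0, _⟩ := hbarpos t htT
  have hc1 : αbar t < 1 := hbarlt1 t ht1 htT
  -- set up square roots
  set s := Real.sqrt (α t) with hs_def
  set r := Real.sqrt (αbar (t - 1)) with hr_def
  have hs2 : s ^ 2 = α t := Real.sq_sqrt ha0.le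
  have hr2 : r ^ 2 = αbar (t - 1) := Real.sq_sqrt hb0.le
  have hs0 : 0 < s := Real.sqrt_pos.mpr ha0
  have hr0 : 0 < r := Real.sqrt_pos.mpr hb0
  have hs1 : s < 1 := by
    rw [hs_def, show (1:ℝ) = Real.sqrt 1 by simp]
    exact Real.sqrt_lt_sqrt ha0.le ha1
  have hr1 : r < 1 := by
    rw [hr_def, show (1:ℝ) = Real.sqrt 1 by simp]
    exact Real.sqrt_lt_sqrt hb0.le hb1
  have hsr : Real.sqrt (αbar t) = s * r := by
    rw [hbart, Real.sqrt_mul hb0.le, mul_comm]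
  have hs2r2 : s ^ 2 * r ^ 2 = αbar t := by rw [hs2, hr2, hbart, mul_comm]
  -- the ψ recursion
  set C := Real.sqrt (1 - αbar (t - 1)) * ψ (t - 1) with hC_def
  have hsqC : ∀ u, 1 ≤ u → u ≤ T →
      Real.sqrt (1 - αbar u) * ψ u
        = ∑ i ∈ Finset.Icc 1 u, Real.sqrt (αbar u / αbar (i - 1)) * γ i := by
    intro u h1 h2
    rw [hψ u h1]
    have : Real.sqrt (1 - αbar u) ≠ 0 := by
      have : (0:ℝ) < 1 - αbar u := by linarith [hbarlt1 u h1 h2]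
      positivity
    field_simp
  have hψrec : Real.sqrt (1 - αbar t) * ψ t = s * (C + γ t) := by
    rw [hsqC t ht1 htT, hC_def, hsqC (t - 1) htm11 htm1T]
    have hsplit : Finset.Icc 1 t = insert t (Finset.Icc 1 (t - 1)) := by
      ext x
      simp only [Finset.mem_Icc, Finset.mem_insert]
      omega
    rw [hsplit, Finset.sum_insert (by simp only [Finset.mem_Icc]; omega)]
    have hterm : ∀ i ∈ Finset.Icc 1 (t - 1),
        Real.sqrt (αbar t / αbar (i - 1)) * γ i
          = s * (Real.sqrt (αbar (t - 1) / αbar (i - 1)) * γ i) := by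
      intro i hi
      simp only [Finset.mem_Icc] at hi
      have hipos : 0 < αbar (i - 1) := (hbarpos (i - 1) (by omega)).1
      rw [hbart, mul_comm (αbar (t - 1)) (α t), mul_div_assoc,
        Real.sqrt_mul ha0.le, ← hs_def, mul_assoc]
    rw [Finset.sum_congr rfl hterm, ← Finset.mul_sum]
    have : Real.sqrt (αbar t / αbar (t - 1)) = s := by
      rw [hbart, mul_comm, mul_div_assoc, div_self (ne_of_gt hb0), mul_one]
    rw [this]
    ring
  have hν'' : ν t = ((1 - α t) * C - α t * (1 - αbar (t - 1)) * γ t) / (1 - αbar t) := by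
    rw [hν t ht2, hC_def]
    ring
  have key := gauss_key s r σ₀ C (γ t) x₀ ξ xt xtm1 hs0 hs1 hr0 hr1 hσ₀
  rw [hs2r2, hs2, hr2] at key
  rw [hψrec, hsr, hν'']
  exact key
end
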